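/- arXiv:math/0010109 — 2 statements merged into one kernel-verified Lean document; each statement's English description precedes it below -/
import Mathlib

section
/- Let w be a finitely supported permutation of the positive integers and let D ∈ RC(w). Suppose (i,j) ∈ D, (i,j+1) ∉ D, and for some integer m ≥ 0 with i − m − 1 ≥ 1: both (k,j) ∈ D and (k,j+1) ∈ D for every k with i − m ≤ k ≤ i − 1, and (i−m−1, j) ∉ D and (i−m−1, j+1) ∉ D. Then the set D' = (D ∖ {(i,j)}) ∪ {(i−m−1, j+1)} obtained by this ladder move is again an rc-graph for the same permutation w, i.e. D' ∈ RC(w). -/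
open MvPolynomial

/-- The length ℓ(w) of a (finitely supported) permutation of the positive integers:
the number of inversions. -/
noncomputable def plength (w : Equiv.Perm ℕ+) : ℕ :=
  Set.ncard {p : ℕ+ × ℕ+ | p.1 < p.2 ∧ w p.2 < w p.1}

/-- The simple reflection sᵢ = t_{i,i+1}. -/
def sP (i : ℕ+) : Equiv.Perm ℕ+ := Equiv.swap i (i + 1)

/-- A reduced word for w: a list of positive letters whose simple reflections multiply
(in order) to w, of length ℓ(w). -/
def IsReducedWordP (w : Equiv.Perm ℕ+) (L : List ℕ+) : Prop :=
  (L.map sP).prod = w ∧ L.length = plength w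

/-- The reading order on cells: increasing row index and, within a row, decreasing
column index. -/
def cellOrd (p q : ℕ+ × ℕ+) : Prop := p.1 < q.1 ∨ (p.1 = q.1 ∧ q.2 ≤ p.2)

instance : DecidableRel cellOrd := fun p q => by unfold cellOrd; infer_instance

instance : IsTrans (ℕ+ × ℕ+) cellOrd := ⟨by
  rintro a b c (h | ⟨h1, h2⟩) (h' | ⟨h1', h2'⟩)
  · exact Or.inl (h.trans h')
  · exact Or.inl (lt_of_lt_of_le h (le_of_eq h1'))
  · exact Or.inl (lt_of_le_of_lt (le_of_eq h1) h')
  · exact Or.inr ⟨h1.trans h1', h2'.trans h2⟩⟩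

instance : IsAntisymm (ℕ+ × ℕ+) cellOrd := ⟨by
  rintro a b (h | ⟨h1, h2⟩) (h' | ⟨h1', h2'⟩)
  · exact absurd h' (not_lt.mpr h.le)
  · exact absurd h (by rw [h1']; exact lt_irrefl _)
  · exact absurd h' (by rw [h1]; exact lt_irrefl _)
  · exact Prod.ext h1 (le_antisymm h2' h2)⟩

instance : IsTotal (ℕ+ × ℕ+) cellOrd := ⟨fun a b => by
  rcases lt_trichotomy a.1 b.1 with h | h | h
  · exact Or.inl (Or.inl h)
  · rcases le_total b.2 a.2 with h2 | h2
    · exact Or.inl (Or.inr ⟨h, h2⟩)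
    · exact Or.inr (Or.inr ⟨h.symm, h2⟩)
  · exact Or.inr (Or.inl h)⟩

/-- The reading word of a finite set of cells: read the cells in order of increasing
row index and, within each row, decreasing column index; the cell (i,j) gives the
letter i + j − 1. -/
def rcWord (D : Finset (ℕ+ × ℕ+)) : List ℕ+ :=
  (D.sort cellOrd).map fun p => p.1 + p.2 - 1

/-- D is an rc-graph for w if its reading word is a reduced word for w. -/
def IsRCGraph (w : Equiv.Perm ℕ+) (D : Finset (ℕ+ × ℕ+)) : Prop :=
  IsReducedWordP w (rcWord D)

/-- The set RC(w) of rc-graphs for w. -/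
def RCset (w : Equiv.Perm ℕ+) : Set (Finset (ℕ+ × ℕ+)) := {D | IsRCGraph w D}

/-- The monomial x^D = ∏_{(i,j) ∈ D} xᵢ. -/
noncomputable def xD (D : Finset (ℕ+ × ℕ+)) : MvPolynomial ℕ+ ℤ :=
  ∏ p ∈ D, X p.1

/-! ### Auxiliary material for the ladder move theorem -/

abbrev Cell := ℕ+ × ℕ+

lemma pnat_ne {a b : ℕ+} (h : (a:ℕ) ≠ (b:ℕ)) : a ≠ b := fun e => h (by rw [e])

lemma pnat_eq {a b : ℕ+} (h : (a:ℕ) = (b:ℕ)) : a = b := PNat.coe_inj.mp h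

lemma cellOrd_iff {p q : Cell} :
    cellOrd p q ↔ ((p.1:ℕ) < (q.1:ℕ) ∨ ((p.1:ℕ) = (q.1:ℕ) ∧ (q.2:ℕ) ≤ (p.2:ℕ))) := by
  unfold cellOrd
  rw [← PNat.coe_lt_coe, ← PNat.coe_le_coe, ← PNat.coe_inj]

lemma cellOrd_refl (p : Cell) : cellOrd p p := Or.inr ⟨rfl, le_rfl⟩

lemma cellOrd_total (p q : Cell) (h : ¬ cellOrd p q) : cellOrd q p :=
  ((Std.Total.total (r := cellOrd) p q).resolve_left h)


lemma cellOrd_mk_left {a b : ℕ+} {q : Cell} :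
    cellOrd (a, b) q ↔ ((a:ℕ) < (q.1:ℕ) ∨ ((a:ℕ) = (q.1:ℕ) ∧ (q.2:ℕ) ≤ (b:ℕ))) :=
  cellOrd_iff

lemma cellOrd_mk_right {a b : ℕ+} {p : Cell} :
    cellOrd p (a, b) ↔ ((p.1:ℕ) < (a:ℕ) ∨ ((p.1:ℕ) = (a:ℕ) ∧ (b:ℕ) ≤ (p.2:ℕ))) :=
  cellOrd_iff

lemma cell_eq_mk {q : Cell} {a b : ℕ+} (h1 : (q.1:ℕ) = (a:ℕ)) (h2 : (q.2:ℕ) = (b:ℕ)) :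
    q = (a, b) :=
  Prod.ext (pnat_eq h1) (pnat_eq h2)

/-- The letter attached to a cell. -/
def lett (p : Cell) : ℕ+ := p.1 + p.2 - 1

lemma lett_coe (p : Cell) : ((lett p : ℕ+) : ℕ) = (p.1:ℕ) + (p.2:ℕ) - 1 := by
  rw [lett, PNat.sub_coe, if_pos]
  · push_cast; rfl
  · rw [← PNat.coe_lt_coe]
    push_cast
    have := p.1.pos; have := p.2.pos
    omega

/-- The product of simple reflections attached to a list of cells, in order. -/
def fp (L : List Cell) : Equiv.Perm ℕ+ := (L.map fun p => sP (lett p)).prod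

lemma fp_nil : fp [] = 1 := rfl

lemma fp_cons (p : Cell) (L : List Cell) : fp (p :: L) = sP (lett p) * fp L := by
  simp [fp]

lemma fp_append (A B : List Cell) : fp (A ++ B) = fp A * fp B := by
  simp [fp]

lemma sP_comm {a b : ℕ+} (h : (a:ℕ) + 2 ≤ (b:ℕ)) : Commute (sP a) (sP b) := by
  apply Equiv.Perm.Disjoint.commute
  intro x
  by_cases hx : x = a ∨ x = a + 1
  · right
    rcases hx with rfl | rfl
    · exact Equiv.swap_apply_of_ne_of_ne (pnat_ne (by omega))
        (pnat_ne (by push_cast; omega))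
    · exact Equiv.swap_apply_of_ne_of_ne (pnat_ne (by push_cast; omega))
        (pnat_ne (by push_cast; omega))
  · left
    push_neg at hx
    exact Equiv.swap_apply_of_ne_of_ne hx.1 hx.2

lemma sP_braid (a : ℕ+) : sP a * sP (a+1) * sP a = sP (a+1) * sP a * sP (a+1) := by
  have e2 : a + 1 + 1 = a + 2 := by
    apply pnat_eq; push_cast; omega
  have h1 : sP a * sP (a+1) * sP a = Equiv.swap a (a+2) := by
    rw [sP, sP, e2, Equiv.swap_comm a (a+1), Equiv.swap_comm (a+1) (a+2)]
    exact Equiv.swap_mul_swap_mul_swap (pnat_ne (by push_cast; omega))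
      (pnat_ne (by push_cast; omega))
  have h2 : sP (a+1) * sP a * sP (a+1) = Equiv.swap a (a+2) := by
    rw [sP, sP, e2,
      Equiv.swap_mul_swap_mul_swap (x := a) (y := a+1) (z := a+2)
        (pnat_ne (by push_cast; omega)) (pnat_ne (by push_cast; omega)),
      Equiv.swap_comm]
  rw [h1, h2]

lemma comm_fp {c : ℕ+} {M : List Cell} (h : ∀ q ∈ M, Commute (sP c) (sP (lett q))) :
    Commute (sP c) (fp M) :=
  Commute.list_prod_right _ _ (by
    intro x hx
    rcases List.mem_map.mp hx with ⟨q, hq, rfl⟩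
    exact h q hq)

lemma comm_slide {G : Type*} [Group G] {a b : G} (h : Commute a b) (c : G) :
    a * (b * c) = b * (a * c) := by rw [← mul_assoc, h.eq, mul_assoc]

/-- Splitting a sorted list along a downward-closed (boolean) predicate. -/
lemma sorted_split (p : Cell → Bool) {L : List Cell} (hL : L.Pairwise cellOrd)
    (hp : ∀ a b : Cell, a ∈ L → b ∈ L → cellOrd a b → p b = true → p a = true) :
    L = L.filter p ++ L.filter (fun x => !p x) := by
  induction L with
  | nil => simp
  | cons x t ih =>
    rw [List.pairwise_cons] at hL
    by_cases hpx : p x = true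
    · rw [List.filter_cons_of_pos hpx, List.filter_cons_of_neg (by simp [hpx]),
        List.cons_append]
      exact congrArg (x :: ·)
        (ih hL.2 (fun a b ha hb => hp a b (List.mem_cons_of_mem _ ha)
          (List.mem_cons_of_mem _ hb)))
    · have h1 : ∀ a ∈ t, p a = false := by
        intro a ha
        cases hpa : p a with
        | false => rfl
        | true =>
          exact absurd (hp x a (List.mem_cons_self) (List.mem_cons_of_mem _ ha)
            (hL.1 a ha) hpa) hpx
      rw [List.filter_cons_of_neg (by simp [hpx]),
        List.filter_cons_of_pos (by simp [hpx]),
        List.filter_eq_nil_iff.mpr (fun a ha => by simp [h1 a ha]),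
        List.filter_eq_self.mpr (fun a ha => by simp [h1 a ha])]
      rfl

/-- A minimal element of a sorted list is its head. -/
lemma head_of_min {L : List Cell} (hL : L.Pairwise cellOrd) {a : Cell} (ha : a ∈ L)
    (hmin : ∀ b ∈ L, cellOrd a b) : ∃ t, L = a :: t := by
  cases L with
  | nil => cases ha
  | cons c t =>
    rcases eq_or_ne c a with rfl | hne
    · exact ⟨t, rfl⟩
    · have hat : a ∈ t := (List.mem_cons.mp ha).resolve_left (fun h => hne h.symm)
      have h1 : cellOrd c a := (List.pairwise_cons.mp hL).1 a hat
      have h2 : cellOrd a c := hmin c (List.mem_cons_self)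
      exact absurd (_root_.antisymm h2 h1) hne.symm

/-- The key "traveling letter" lemma. -/
lemma travel : ∀ (m : ℕ) (k j c : ℕ+) (M : List Cell),
    M.Pairwise cellOrd → M.Nodup →
    (∀ q ∈ M, (k:ℕ) ≤ (q.1:ℕ) ∧ (q.1:ℕ) ≤ (k:ℕ) + m) →
    (∀ q ∈ M, q.1 = k → (q.2:ℕ) + 1 ≤ (j:ℕ)) →
    (∀ r : ℕ+, (k:ℕ) < (r:ℕ) → (r:ℕ) ≤ (k:ℕ) + m → (r, j) ∈ M ∧ (r, j+1) ∈ M) →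
    (c:ℕ) = (k:ℕ) + (j:ℕ) + m →
    sP (k + j) * fp M = fp M * sP c := by
  intro m
  induction m with
  | zero =>
    intro k j c M hpw hnd hrows hrowk _ hc
    have hcom : Commute (sP (k + j)) (fp M) := by
      apply comm_fp
      intro q hq
      refine (sP_comm ?_).symm
      rw [lett_coe]
      push_cast
      have h1 := hrows q hq
      have h2 := hrowk q hq (pnat_eq (by omega))
      have := q.2.pos
      omega
    have : c = k + j := pnat_eq (by push_cast at hc ⊢; omega)
    rw [this, hcom.eq]
  | succ m ih =>
    intro k j c M hpw hnd hrows hrowk hpairs hc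
    -- split off row k
    set pA : Cell → Bool := fun q => decide (q.1 = k) with hpA
    have hsplitA : M = M.filter pA ++ M.filter (fun x => !pA x) := by
      apply sorted_split pA hpw
      intro a b ha hb hab hpb
      simp only [hpA, decide_eq_true_eq] at hpb ⊢
      have h1 := hrows a ha
      have h2 := (cellOrd_iff.mp hab)
      apply pnat_eq
      have h3 : (b.1:ℕ) = (k:ℕ) := by rw [hpb]
      omega
    set A := M.filter pA with hA
    set B := M.filter (fun x => !pA x) with hB
    have hBmem : ∀ q ∈ B, q ∈ M ∧ (k:ℕ) + 1 ≤ (q.1:ℕ) := by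
      intro q hq
      rw [hB, List.mem_filter] at hq
      refine ⟨hq.1, ?_⟩
      have h1 := (hrows q hq.1).1
      have h2 : ¬ (q.1 = k) := by simpa [hpA] using hq.2
      have h3 : (q.1:ℕ) ≠ (k:ℕ) := fun e => h2 (pnat_eq e)
      omega
    have hpwB : B.Pairwise cellOrd := hpw.sublist (List.filter_sublist)
    have hndB : B.Nodup := hnd.sublist (List.filter_sublist)
    -- the pair in row k+1
    have hp1M : ((k+1, j+1) : Cell) ∈ M :=
      (hpairs (k+1) (by push_cast; omega) (by push_cast; omega)).2
    have hp0M : ((k+1, j) : Cell) ∈ M :=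
      (hpairs (k+1) (by push_cast; omega) (by push_cast; omega)).1
    have hrowne : ∀ s : ℕ+, ¬ (((k+1, s) : Cell).1 = k) := by
      intro s h
      exact pnat_ne (a := k+1) (b := k) (by push_cast; omega) h
    have hp1B : ((k+1, j+1) : Cell) ∈ B := by
      rw [hB, List.mem_filter]
      refine ⟨hp1M, ?_⟩
      simp only [hpA, Bool.not_eq_true', decide_eq_false_iff_not]
      exact hrowne (j+1)
    have hp0B : ((k+1, j) : Cell) ∈ B := by
      rw [hB, List.mem_filter]
      refine ⟨hp0M, ?_⟩
      simp only [hpA, Bool.not_eq_true', decide_eq_false_iff_not]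
      exact hrowne j
    -- split B before the pair
    set pX : Cell → Bool := fun q => decide (cellOrd q (k+1, j+1) ∧ q ≠ (k+1, j+1)) with hpX
    have hsplitX : B = B.filter pX ++ B.filter (fun x => !pX x) := by
      apply sorted_split pX hpwB
      intro a b _ _ hab hpb
      simp only [hpX, decide_eq_true_eq] at hpb ⊢
      refine ⟨_root_.trans hab hpb.1, ?_⟩
      rintro rfl
      exact hpb.2 (_root_.antisymm hpb.1 hab)
    set X := B.filter pX with hX
    set B₂ := B.filter (fun x => !pX x) with hB₂
    have hpwB₂ : B₂.Pairwise cellOrd := hpwB.sublist (List.filter_sublist)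
    have hndB₂ : B₂.Nodup := hndB.sublist (List.filter_sublist)
    have hp1B₂ : ((k+1, j+1) : Cell) ∈ B₂ := by
      rw [hB₂, List.mem_filter]
      exact ⟨hp1B, by simp [hpX]⟩
    have hB₂min : ∀ q ∈ B₂, cellOrd (k+1, j+1) q := by
      intro q hq
      rw [hB₂, List.mem_filter] at hq
      have h2 : ¬ cellOrd q (k+1, j+1) ∨ q = (k+1, j+1) := by simpa [hpX] using hq.2
      rcases h2 with h2 | h2
      · exact cellOrd_total _ _ h2
      · rw [h2]
        exact cellOrd_refl _
    obtain ⟨B₃, hB₃⟩ := head_of_min hpwB₂ hp1B₂ hB₂min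
    have hpwB₃ : B₃.Pairwise cellOrd := by
      have := hpwB₂; rw [hB₃, List.pairwise_cons] at this; exact this.2
    have hndB₃ : B₃.Nodup := by
      have := hndB₂; rw [hB₃, List.nodup_cons] at this; exact this.2
    have hp1nB₃ : ((k+1, j+1) : Cell) ∉ B₃ := by
      have := hndB₂; rw [hB₃, List.nodup_cons] at this; exact this.1
    have hp0B₃ : ((k+1, j) : Cell) ∈ B₃ := by
      have h4 : ((k+1, j) : Cell) ∈ B₂ := by
        rw [hB₂, List.mem_filter]
        refine ⟨hp0B, ?_⟩
        simp only [hpX, Bool.not_eq_true', decide_eq_false_iff_not]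
        rintro ⟨h5, -⟩
        rw [cellOrd_mk_left] at h5
        push_cast at h5
        omega
      rw [hB₃, List.mem_cons] at h4
      refine h4.resolve_left ?_
      intro h5
      have := congrArg Prod.snd h5
      exact pnat_ne (a := j) (b := j+1) (by push_cast; omega) this
    have hB₃min : ∀ q ∈ B₃, cellOrd (k+1, j) q := by
      intro q hq
      have h5 : cellOrd (k+1, j+1) q := by
        have := hpwB₂; rw [hB₃, List.pairwise_cons] at this
        exact this.1 q hq
      have h6 : q ≠ (k+1, j+1) := fun e => hp1nB₃ (e ▸ hq)
      rw [cellOrd_mk_left] at h5 ⊢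
      push_cast at h5 ⊢
      rcases h5 with h5 | ⟨h5a, h5b⟩
      · left; omega
      · right
        refine ⟨h5a, ?_⟩
        have h7 : (q.2:ℕ) ≠ (j:ℕ) + 1 :=
          fun h8 => h6 (cell_eq_mk (by push_cast; omega) (by push_cast; omega))
        omega
    obtain ⟨Z, hZ⟩ := head_of_min hpwB₃ hp0B₃ hB₃min
    have hpwZ : Z.Pairwise cellOrd := by
      have := hpwB₃; rw [hZ, List.pairwise_cons] at this; exact this.2
    have hndZ : Z.Nodup := by
      have := hndB₃; rw [hZ, List.nodup_cons] at this; exact this.2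
    have hp0nZ : ((k+1, j) : Cell) ∉ Z := by
      have := hndB₃; rw [hZ, List.nodup_cons] at this; exact this.1
    have hZmem : ∀ q ∈ Z, q ∈ M ∧ (k:ℕ) + 1 ≤ (q.1:ℕ) := by
      intro q hq
      have h5 : q ∈ B := by
        have h6 : q ∈ B₂ := by
          rw [hB₃, hZ]
          exact List.mem_cons_of_mem _ (List.mem_cons_of_mem _ hq)
        rw [hB₂, List.mem_filter] at h6; exact h6.1
      exact hBmem q h5
    -- apply induction hypothesis to Z
    have hIH : sP ((k+1) + j) * fp Z = fp Z * sP c := by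
      apply ih (k+1) j c Z hpwZ hndZ
      · intro q hq
        have h5 := (hZmem q hq).2
        have h6 := (hrows q (hZmem q hq).1).2
        push_cast
        omega
      · intro q hq hq1
        have h5 := hB₃min q (by rw [hZ]; exact List.mem_cons_of_mem _ hq)
        rw [cellOrd_mk_left] at h5
        have hq1' : (q.1:ℕ) = (k:ℕ) + 1 := by rw [hq1]; push_cast; ring
        have h8 : (q.2:ℕ) ≠ (j:ℕ) := by
          intro h9
          have hq' : q = ((k+1 : ℕ+), j) := cell_eq_mk (by push_cast; omega) h9
          exact hp0nZ (hq' ▸ hq)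
        push_cast at h5
        omega
      · intro r hr1 hr2
        push_cast at hr1 hr2
        have h5 : (k:ℕ) < (r:ℕ) := by omega
        have h6 : (r:ℕ) ≤ (k:ℕ) + (m+1) := by omega
        have key : ∀ s : ℕ+, (r, s) ∈ M → (r, s) ∈ Z := by
          intro s hs
          have hrB : (r, s) ∈ B := by
            rw [hB, List.mem_filter]
            refine ⟨hs, ?_⟩
            simp only [hpA, Bool.not_eq_true', decide_eq_false_iff_not]
            intro h7
            exact pnat_ne (a := r) (b := k) (by omega) h7
          have hrB₂ : (r, s) ∈ B₂ := by
            rw [hB₂, List.mem_filter]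
            refine ⟨hrB, ?_⟩
            simp only [hpX, Bool.not_eq_true', decide_eq_false_iff_not]
            rintro ⟨h7, -⟩
            rw [cellOrd_mk_left] at h7
            push_cast at h7
            omega
          have hrB₃ : (r, s) ∈ B₃ := by
            rw [hB₃, List.mem_cons] at hrB₂
            refine hrB₂.resolve_left ?_
            intro h7
            have := congrArg Prod.fst h7
            exact pnat_ne (a := r) (b := k+1) (by push_cast; omega) this
          rw [hZ, List.mem_cons] at hrB₃
          refine hrB₃.resolve_left ?_
          intro h7
          have := congrArg Prod.fst h7
          exact pnat_ne (a := r) (b := k+1) (by push_cast; omega) this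
        exact ⟨key j (hpairs r h5 h6).1, key (j+1) (hpairs r h5 h6).2⟩
      · exact hc.trans (by push_cast; omega)
    -- commutation with A and X
    have hcomA : Commute (sP (k + j)) (fp A) := by
      apply comm_fp
      intro q hq
      rw [hA, List.mem_filter] at hq
      have h5 : q.1 = k := by simpa [hpA] using hq.2
      have h6 := hrowk q hq.1 h5
      refine (sP_comm ?_).symm
      rw [lett_coe]
      push_cast
      have h7 : (q.1:ℕ) = (k:ℕ) := by rw [h5]
      have := q.2.pos
      omega
    have hcomX : Commute (sP (k + j)) (fp X) := by
      apply comm_fp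
      intro q hq
      rw [hX, List.mem_filter] at hq
      have h5 : cellOrd q (k+1, j+1) ∧ q ≠ (k+1, j+1) := by simpa [hpX] using hq.2
      have h6 := hBmem q hq.1
      rw [cellOrd_mk_right] at h5
      apply sP_comm
      rw [lett_coe]
      push_cast
      rcases h5.1 with h7 | ⟨h7a, h7b⟩
      · push_cast at h7; omega
      · push_cast at h7a h7b
        have h8 : (q.2:ℕ) ≠ (j:ℕ) + 1 :=
          fun h9 => h5.2 (cell_eq_mk (by push_cast; omega) (by push_cast; omega))
        omega
    -- letters of the pair
    have hl1 : lett (k+1, j+1) = k + j + 1 := by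
      apply pnat_eq; rw [lett_coe]; push_cast; omega
    have hl0 : lett (k+1, j) = k + j := by
      apply pnat_eq; rw [lett_coe]; push_cast; omega
    have hkj : (k+1) + j = k + j + 1 := by apply pnat_eq; push_cast; omega
    -- assemble
    rw [hsplitA, hsplitX, hB₃, hZ]
    rw [fp_append, fp_append, fp_cons, fp_cons, hl1, hl0]
    rw [hkj] at hIH
    have core : sP (k+j) * (sP (k+j+1) * (sP (k+j) * fp Z))
        = sP (k+j+1) * (sP (k+j) * (fp Z * sP c)) := by
      rw [← hIH]
      show sP (k+j) * (sP (k+j+1) * (sP (k+j) * fp Z))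
        = sP (k+j+1) * (sP (k+j) * (sP (k+j+1) * fp Z))
      rw [← mul_assoc, ← mul_assoc, ← mul_assoc, ← mul_assoc, sP_braid]
    calc sP (k + j) * (fp A * (fp X * (sP (k+j+1) * (sP (k+j) * fp Z))))
        = fp A * (sP (k + j) * (fp X * (sP (k+j+1) * (sP (k+j) * fp Z)))) :=
          comm_slide hcomA _
      _ = fp A * (fp X * (sP (k + j) * (sP (k+j+1) * (sP (k+j) * fp Z)))) := by
          rw [comm_slide hcomX]
      _ = fp A * (fp X * (sP (k+j+1) * (sP (k+j) * (fp Z * sP c)))) := by rw [core]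
      _ = fp A * (fp X * (sP (k+j+1) * (sP (k+j) * fp Z))) * sP c := by
          simp only [mul_assoc]

lemma rcProd (E : Finset Cell) : ((rcWord E).map sP).prod = fp (Finset.sort E cellOrd) := by
  rw [rcWord, List.map_map]
  rfl

/-- A ladder move of size m: the cell (i,j) moves to (i−m−1, j+1), where rows
i−m,…,i−1 contain cells in both columns j, j+1, row i−m−1 contains neither, and
(i,j+1) ∉ D.  Here i' denotes i − m − 1 (so (i' : ℕ) + m + 1 = i).  The result is
again an rc-graph for the same permutation. -/
theorem ladder_move (w : Equiv.Perm ℕ+) (hw : {x | w x ≠ x}.Finite)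
    (D : Finset (ℕ+ × ℕ+)) (hD : D ∈ RCset w)
    (i j i' : ℕ+) (m : ℕ) (hi' : (i' : ℕ) + m + 1 = (i : ℕ))
    (h1 : (i, j) ∈ D) (h2 : (i, j + 1) ∉ D)
    (h3 : ∀ k : ℕ+, i' < k → k < i → (k, j) ∈ D ∧ (k, j + 1) ∈ D)
    (h4 : (i', j) ∉ D) (h5 : (i', j + 1) ∉ D) :
    insert (i', j + 1) (D.erase (i, j)) ∈ RCset w := by
  have hD' : IsReducedWordP w (rcWord D) := hD
  obtain ⟨hprod, hlen⟩ := hD'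
  set L := Finset.sort D cellOrd with hLdef
  have hLpw : L.Pairwise cellOrd := Finset.pairwise_sort D cellOrd
  have hLnd : L.Nodup := Finset.sort_nodup D cellOrd
  have hLmem : ∀ q : Cell, q ∈ L ↔ q ∈ D := fun q => Finset.mem_sort cellOrd
  -- first split: before the insertion point of (i', j+1)
  set pU : Cell → Bool := fun q => decide (cellOrd q (i', j+1)) with hpU
  have hsplitU : L = L.filter pU ++ L.filter (fun x => !pU x) := by
    apply sorted_split pU hLpw
    intro a b _ _ hab hpb
    simp only [hpU, decide_eq_true_eq] at hpb ⊢
    exact _root_.trans hab hpb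
  set U := L.filter pU with hU
  set V := L.filter (fun x => !pU x) with hV
  have hVmem : ∀ q ∈ V, q ∈ L ∧ ¬ cellOrd q (i', j+1) := by
    intro q hq
    rw [hV, List.mem_filter] at hq
    exact ⟨hq.1, by simpa [hpU] using hq.2⟩
  have hUmem : ∀ q ∈ U, q ∈ L ∧ cellOrd q (i', j+1) := by
    intro q hq
    rw [hU, List.mem_filter] at hq
    exact ⟨hq.1, by simpa [hpU] using hq.2⟩
  have hpwV : V.Pairwise cellOrd := hLpw.sublist (List.filter_sublist)
  have hndV : V.Nodup := hLnd.sublist (List.filter_sublist)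
  -- second split: before the cell (i, j)
  set pM : Cell → Bool := fun q => decide (cellOrd q (i, j) ∧ q ≠ (i, j)) with hpM
  have hsplitM : V = V.filter pM ++ V.filter (fun x => !pM x) := by
    apply sorted_split pM hpwV
    intro a b _ _ hab hpb
    simp only [hpM, decide_eq_true_eq] at hpb ⊢
    refine ⟨_root_.trans hab hpb.1, ?_⟩
    rintro rfl
    exact hpb.2 (_root_.antisymm hpb.1 hab)
  set M := V.filter pM with hM
  set V₂ := V.filter (fun x => !pM x) with hV₂
  have hpwV₂ : V₂.Pairwise cellOrd := hpwV.sublist (List.filter_sublist)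
  have hndV₂ : V₂.Nodup := hndV.sublist (List.filter_sublist)
  have hijV : ((i, j) : Cell) ∈ V := by
    rw [hV, List.mem_filter]
    refine ⟨(hLmem _).mpr h1, ?_⟩
    simp only [hpU, Bool.not_eq_true', decide_eq_false_iff_not]
    rw [cellOrd_mk_left]
    push_cast
    omega
  have hijV₂ : ((i, j) : Cell) ∈ V₂ := by
    rw [hV₂, List.mem_filter]
    refine ⟨hijV, ?_⟩
    simp only [hpM, Bool.not_eq_true', decide_eq_false_iff_not]
    rintro ⟨-, h7⟩
    exact h7 rfl
  have hV₂min : ∀ q ∈ V₂, cellOrd (i, j) q := by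
    intro q hq
    rw [hV₂, List.mem_filter] at hq
    have h6 : ¬ cellOrd q (i, j) ∨ q = (i, j) := by simpa [hpM] using hq.2
    rcases h6 with h6 | h6
    · exact cellOrd_total _ _ h6
    · rw [h6]
      exact cellOrd_refl _
  obtain ⟨W, hW⟩ := head_of_min hpwV₂ hijV₂ hV₂min
  have hpwW : W.Pairwise cellOrd := by
    have := hpwV₂; rw [hW, List.pairwise_cons] at this; exact this.2
  have hndW : W.Nodup := by
    have := hndV₂; rw [hW, List.nodup_cons] at this; exact this.2
  have hijnW : ((i, j) : Cell) ∉ W := by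
    have := hndV₂; rw [hW, List.nodup_cons] at this; exact this.1
  have hLeq : L = U ++ (M ++ ((i, j) :: W)) := by
    rw [hsplitU, hsplitM, hW]
  -- membership facts for M
  have hMfacts : ∀ q ∈ M, q ∈ D ∧ ¬ cellOrd q (i', j+1) ∧ cellOrd q (i, j) ∧ q ≠ (i, j) := by
    intro q hq
    rw [hM, List.mem_filter] at hq
    have h6 := hVmem q hq.1
    have h7 : cellOrd q (i, j) ∧ q ≠ (i, j) := by simpa [hpM] using hq.2
    exact ⟨(hLmem q).mp h6.1, h6.2, h7.1, h7.2⟩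
  have hWmem : ∀ q ∈ W, q ∈ V := by
    intro q hq
    have : q ∈ V₂ := by rw [hW]; exact List.mem_cons_of_mem _ hq
    rw [hV₂, List.mem_filter] at this
    exact this.1
  have hMmemV : ∀ q ∈ M, q ∈ V := by
    intro q hq
    rw [hM, List.mem_filter] at hq
    exact hq.1
  -- the sorted list of the new diagram
  set L' : List Cell := U ++ ((i', j+1) :: (M ++ W)) with hL'
  have hL'nd : L'.Nodup := by
    rw [hL', List.nodup_middle, List.nodup_cons]
    constructor
    · intro hmem
      apply h5
      rcases List.mem_append.mp hmem with h6 | h6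
      · exact (hLmem _).mp (hUmem _ h6).1
      · rcases List.mem_append.mp h6 with h7 | h7
        · exact (hMfacts _ h7).1
        · exact (hLmem _).mp (hVmem _ (hWmem _ h7)).1
    · have hsub : List.Sublist (U ++ (M ++ W)) L := by
        rw [hLeq]
        apply (List.append_sublist_append_left U).mpr
        apply (List.append_sublist_append_left M).mpr
        exact List.sublist_cons_self _ _
      exact hLnd.sublist hsub
  have hL'pw : L'.Pairwise cellOrd := by
    have hLpw2 := hLpw
    rw [hLeq] at hLpw2
    obtain ⟨hUpw, hrest, hcrossU⟩ := List.pairwise_append.mp hLpw2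
    obtain ⟨hMpw, hijWpw, hcrossM⟩ := List.pairwise_append.mp hrest
    obtain ⟨hijmin, hWpw⟩ := List.pairwise_cons.mp hijWpw
    have hVmin : ∀ b ∈ V, cellOrd (i', j+1) b := fun b hb =>
      cellOrd_total _ _ (hVmem b hb).2
    rw [hL', List.pairwise_append]
    refine ⟨hUpw, ?_, ?_⟩
    · rw [List.pairwise_cons]
      constructor
      · intro b hb
        rcases List.mem_append.mp hb with h6 | h6
        · exact hVmin b (hMmemV b h6)
        · exact hVmin b (hWmem b h6)
      · rw [List.pairwise_append]
        refine ⟨hMpw, hWpw, ?_⟩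
        intro a ha b hb
        exact hcrossM a ha b (List.mem_cons_of_mem _ hb)
    · intro a ha b hb
      rcases List.mem_cons.mp hb with rfl | h6
      · exact (hUmem a ha).2
      · rcases List.mem_append.mp h6 with h7 | h7
        · exact hcrossU a ha b (List.mem_append.mpr (Or.inl h7))
        · exact hcrossU a ha b
            (List.mem_append.mpr (Or.inr (List.mem_cons_of_mem _ h7)))
  have hsortD' : Finset.sort (insert (i', j + 1) (D.erase (i, j))) cellOrd = L' := by
    apply List.Perm.eq_of_pairwise' (Finset.pairwise_sort _ cellOrd) hL'pw ?_
    apply (List.perm_ext_iff_of_nodup (Finset.sort_nodup _ cellOrd) hL'nd).mpr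
    intro q
    rw [Finset.mem_sort, Finset.mem_insert, Finset.mem_erase]
    have hLdecomp : q ∈ D ↔ (q ∈ U ∨ q ∈ M ∨ q = (i, j) ∨ q ∈ W) := by
      rw [← hLmem, hLeq]
      simp only [List.mem_append, List.mem_cons]
    have hijnU : ((i, j) : Cell) ∉ U := by
      intro h6
      have := hLnd
      rw [hsplitU, List.nodup_append] at this
      exact this.2.2 _ h6 _ hijV rfl
    have hijnM : ((i, j) : Cell) ∉ M := by
      intro h6
      exact (hMfacts _ h6).2.2.2 rfl
    rw [hL']
    simp only [List.mem_append, List.mem_cons]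
    have hqU : q ∈ U → q ≠ (i, j) := fun h e => hijnU (e ▸ h)
    have hqM : q ∈ M → q ≠ (i, j) := fun h e => hijnM (e ▸ h)
    have hqW : q ∈ W → q ≠ (i, j) := fun h e => hijnW (e ▸ h)
    constructor
    · rintro (h6 | ⟨h6, h7⟩)
      · exact Or.inr (Or.inl h6)
      · rcases hLdecomp.mp h7 with h8 | h8 | h8 | h8
        · exact Or.inl h8
        · exact Or.inr (Or.inr (Or.inl h8))
        · exact absurd h8 h6
        · exact Or.inr (Or.inr (Or.inr h8))
    · rintro (h6 | h6 | h6 | h6)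
      · exact Or.inr ⟨hqU h6, hLdecomp.mpr (Or.inl h6)⟩
      · exact Or.inl h6
      · exact Or.inr ⟨hqM h6, hLdecomp.mpr (Or.inr (Or.inl h6))⟩
      · exact Or.inr ⟨hqW h6, hLdecomp.mpr (Or.inr (Or.inr (Or.inr h6)))⟩
  -- split M into the ladder part and the rest of row i
  set pR : Cell → Bool := fun q => decide ((q.1:ℕ) ≤ (i':ℕ) + m) with hpR
  have hsplitR : M = M.filter pR ++ M.filter (fun x => !pR x) := by
    apply sorted_split pR (hpwV.sublist (List.filter_sublist))
    intro a b _ _ hab hpb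
    simp only [hpR, decide_eq_true_eq] at hpb ⊢
    rcases cellOrd_iff.mp hab with h6 | ⟨h6, -⟩ <;> omega
  set M₁ := M.filter pR with hM₁
  set X₂ := M.filter (fun x => !pR x) with hX₂
  have hpwM : M.Pairwise cellOrd := hpwV.sublist (List.filter_sublist)
  have hndM : M.Nodup := hndV.sublist (List.filter_sublist)
  have htrav : sP (i' + j) * fp M₁ = fp M₁ * sP (lett (i, j)) := by
    apply travel m i' j (lett (i, j)) M₁
      (hpwM.sublist (List.filter_sublist)) (hndM.sublist (List.filter_sublist))
    · intro q hq
      rw [hM₁, List.mem_filter] at hq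
      have h6 : (q.1:ℕ) ≤ (i':ℕ) + m := by simpa [hpR] using hq.2
      have h7 := (hMfacts q hq.1).2.1
      rw [cellOrd_mk_right] at h7
      push_cast at h7
      push_neg at h7
      exact ⟨by omega, h6⟩
    · intro q hq hq1
      rw [hM₁, List.mem_filter] at hq
      have h7 := (hMfacts q hq.1).2.1
      rw [cellOrd_mk_right] at h7
      push_cast at h7
      push_neg at h7
      have hq1' : (q.1:ℕ) = (i':ℕ) := by rw [hq1]
      have h8 : (q.2:ℕ) ≠ (j:ℕ) := by
        intro h9
        exact h4 ((cell_eq_mk hq1' h9 : q = (i', j)) ▸ (hMfacts q hq.1).1)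
      have h10 := h7.2 hq1'
      omega
    · intro r hr1 hr2
      have hr3 : i' < r := (PNat.coe_lt_coe _ _).mp hr1
      have hr4 : r < i := (PNat.coe_lt_coe _ _).mp (by omega)
      have key : ∀ s : ℕ+, (r, s) ∈ D → (r, s) ∈ M₁ := by
        intro s hs
        have h6 : ((r, s) : Cell) ∈ V := by
          rw [hV, List.mem_filter]
          refine ⟨(hLmem _).mpr hs, ?_⟩
          simp only [hpU, Bool.not_eq_true', decide_eq_false_iff_not]
          rw [cellOrd_mk_left]
          push_cast
          omega
        have h7 : ((r, s) : Cell) ∈ M := by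
          rw [hM, List.mem_filter]
          refine ⟨h6, ?_⟩
          simp only [hpM, decide_eq_true_eq]
          constructor
          · rw [cellOrd_mk_left]
            push_cast
            omega
          · intro h8
            have := congrArg Prod.fst h8
            exact pnat_ne (a := r) (b := i) (by omega) this
        rw [hM₁, List.mem_filter]
        refine ⟨h7, ?_⟩
        simp only [hpR, decide_eq_true_eq]
        push_cast
        omega
      exact ⟨key j (h3 r hr3 hr4).1, key (j+1) (h3 r hr3 hr4).2⟩
    · rw [lett_coe]
      push_cast
      have := j.pos
      omega
  have hcomX₂ : Commute (sP (lett (i, j))) (fp X₂) := by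
    apply comm_fp
    intro q hq
    rw [hX₂, List.mem_filter] at hq
    have h6 : ¬ ((q.1:ℕ) ≤ (i':ℕ) + m) := by simpa [hpR] using hq.2
    obtain ⟨hqD, -, h7, h8⟩ := hMfacts q hq.1
    rw [cellOrd_mk_right] at h7
    push_cast at h7
    have h9 : (q.1:ℕ) = (i:ℕ) ∧ (j:ℕ) ≤ (q.2:ℕ) := by
      rcases h7 with h7 | h7
      · omega
      · exact ⟨h7.1, h7.2⟩
    have h10 : (q.2:ℕ) ≠ (j:ℕ) := by
      intro h11
      exact h8 (cell_eq_mk h9.1 h11)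
    have h11 : (q.2:ℕ) ≠ (j:ℕ) + 1 := by
      intro h12
      exact h2 ((cell_eq_mk h9.1 (by push_cast; omega) : q = (i, j+1)) ▸ hqD)
    apply sP_comm
    rw [lett_coe, lett_coe]
    push_cast
    have := i.pos
    have := j.pos
    omega
  have key : sP (lett (i', j+1)) * fp M = fp M * sP (lett (i, j)) := by
    have hletti' : lett (i', j+1) = i' + j := by
      apply pnat_eq
      rw [lett_coe]
      push_cast
      omega
    rw [hletti', hsplitR, fp_append, ← mul_assoc, htrav, mul_assoc, hcomX₂.eq, ← mul_assoc]
  -- conclusion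
  have hw' : fp L = w := (rcProd D).symm.trans hprod
  constructor
  · show ((rcWord _).map sP).prod = w
    rw [rcProd, hsortD', hL', fp_append, fp_cons, fp_append,
      ← mul_assoc (sP (lett (i', j+1))), key, mul_assoc]
    rw [hLeq, fp_append, fp_append, fp_cons] at hw'
    rw [← hw']
  · show (rcWord _).length = plength w
    rw [rcWord, List.length_map, Finset.length_sort]
    have h6 : ((i', j+1) : Cell) ∉ D.erase (i, j) := fun h => h5 (Finset.mem_of_mem_erase h)
    rw [Finset.card_insert_of_notMem h6, Finset.card_erase_of_mem h1]
    have hpos : 0 < D.card := Finset.card_pos.mpr ⟨_, h1⟩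
    rw [rcWord, List.length_map, Finset.length_sort] at hlen
    omega
end

section
/- Let w be a finitely supported permutation of the positive integers. The map sending a pair (a, α), where a = (a₁,...,a_p) is a reduced word for w and α = (α₁,...,α_p) is a compatible sequence for a, to the set D(a,α) = {(α_k, a_k − α_k + 1) : 1 ≤ k ≤ p} is a bijection from the set of such pairs {(a, α) : a ∈ R(w), α ∈ C(a)} onto the set RC(w) of rc-graphs for w; moreover, for each pair, reading the cells of D(a,α) in order of increasing row index and, within each row, decreasing column index recovers the word a, and each cell (i,j) contributes the factor x_i = x_{α_k}, so that x^{D(a,α)} = x_{α₁}···x_{α_p}. -/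
open MvPolynomial

/-- α is a compatible sequence for the word a: both have the same length, α is a
weakly increasing sequence of positive integers, αₖ ≤ aₖ for all k, and
αₖ < αₖ₊₁ whenever aₖ < aₖ₊₁. -/
def IsCompatibleP (a α : List ℕ+) : Prop :=
  α.length = a.length ∧
  (∀ k, k + 1 < α.length → α.getD k 1 ≤ α.getD (k + 1) 1) ∧
  (∀ k, k < α.length → α.getD k 1 ≤ a.getD k 1) ∧
  (∀ k, k + 1 < α.length → a.getD k 1 < a.getD (k + 1) 1 → α.getD k 1 < α.getD (k + 1) 1)

/-- The set of cells D(a,α) = {(αₖ, aₖ − αₖ + 1) : 1 ≤ k ≤ p} associated to a pair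
(a, α) of a word and a compatible sequence. -/
def cellsOfPair (p : List ℕ+ × List ℕ+) : Finset (ℕ+ × ℕ+) :=
  ((p.2.zip p.1).map fun q =>
    (q.1, (⟨(q.2 : ℕ) - (q.1 : ℕ) + 1, Nat.succ_pos _⟩ : ℕ+))).toFinset

section CoxeterAux

def InvSet (u : Equiv.Perm ℕ+) : Set (ℕ+ × ℕ+) := {p | p.1 < p.2 ∧ u p.2 < u p.1}

lemma plength_eq (w : Equiv.Perm ℕ+) : plength w = (InvSet w).ncard := rfl

lemma invSet_finite {u : Equiv.Perm ℕ+} (hu : {x | u x ≠ x}.Finite) :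
    (InvSet u).Finite := by
  classical
  set S := hu.toFinset with hS
  set N : ℕ+ := (S.sup id) ⊔ (S.sup u) with hN
  have hbound : ∀ x ∈ S, x ≤ N ∧ u x ≤ N := fun x hx =>
    ⟨le_sup_of_le_left (Finset.le_sup (f := id) hx),
     le_sup_of_le_right (Finset.le_sup (f := u) hx)⟩
  apply Set.Finite.subset ((Set.finite_Iic N).prod (Set.finite_Iic N))
  rintro ⟨p, q⟩ ⟨hpq, hinv⟩
  by_cases hq : q ∈ S
  · exact ⟨le_of_lt (lt_of_lt_of_le hpq (hbound q hq).1), (hbound q hq).1⟩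
  · have hqfix : u q = q := by
      by_contra h; exact hq (by rw [hS, Set.Finite.mem_toFinset]; exact h)
    have hp : p ∈ S := by
      by_contra h
      have hpfix : u p = p := by
        by_contra h'; exact h (by rw [hS, Set.Finite.mem_toFinset]; exact h')
      rw [hqfix, hpfix] at hinv
      exact absurd hinv (not_lt.mpr hpq.le)
    refine ⟨(hbound p hp).1, ?_⟩
    calc q = u q := hqfix.symm
    _ ≤ u p := hinv.le
    _ ≤ N := (hbound p hp).2

lemma sP_swap_order {i x y : ℕ+} (hxy : x < y) (h : sP i y < sP i x) :
    x = i ∧ y = i + 1 := by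
  have hii : i < i + 1 := by
    rw [← PNat.coe_lt_coe]; push_cast; omega
  by_cases hx : x = i
  · by_cases hy : y = i + 1
    · exact ⟨hx, hy⟩
    · have hyne : y ≠ i := by rw [← hx]; exact ne_of_gt hxy
      rw [sP, hx, Equiv.swap_apply_left, Equiv.swap_apply_of_ne_of_ne hyne hy] at h
      have h2 : i < y := by rw [← hx]; exact hxy
      have h1 : (y : ℕ) < (i : ℕ) + 1 := by
        rw [← PNat.coe_lt_coe] at h; push_cast at h; omega
      rw [← PNat.coe_lt_coe] at h2
      omega
  · exfalso
    by_cases hx2 : x = i + 1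
    · have h3 : i + 1 < y := by rw [← hx2]; exact hxy
      have hy1 : y ≠ i := ne_of_gt (hii.trans h3)
      have hy2 : y ≠ i + 1 := ne_of_gt h3
      rw [sP, hx2, Equiv.swap_apply_right, Equiv.swap_apply_of_ne_of_ne hy1 hy2] at h
      exact absurd h (not_lt.mpr (hii.trans h3).le)
    · rw [sP, Equiv.swap_apply_of_ne_of_ne hx hx2] at h
      by_cases hy : y = i
      · rw [hy, Equiv.swap_apply_left] at h
        have hxi : x < i := by rw [← hy]; exact hxy
        exact absurd (hxi.trans hii) (not_lt.mpr h.le)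
      · by_cases hy2 : y = i + 1
        · rw [hy2, Equiv.swap_apply_right] at h
          have hxy' : x < i + 1 := by rw [← hy2]; exact hxy
          rw [← PNat.coe_lt_coe] at h hxy'
          push_cast at hxy'
          omega
        · rw [Equiv.swap_apply_of_ne_of_ne hy hy2] at h
          exact absurd hxy (not_lt.mpr h.le)

lemma plength_sP_mul_le {u : Equiv.Perm ℕ+} (hu : {x | u x ≠ x}.Finite) (i : ℕ+) :
    plength (sP i * u) ≤ plength u + 1 := by
  classical
  have hsub : InvSet (sP i * u) ⊆ InvSet u ∪ {(u⁻¹ i, u⁻¹ (i + 1))} := by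
    rintro ⟨p, q⟩ ⟨hpq, hinv⟩
    rw [Equiv.Perm.mul_apply, Equiv.Perm.mul_apply] at hinv
    rcases lt_trichotomy (u q) (u p) with hlt | heq | hgt
    · exact Or.inl ⟨hpq, hlt⟩
    · exact absurd (u.injective heq) (ne_of_gt hpq)
    · obtain ⟨h1, h2⟩ := sP_swap_order hgt hinv
      refine Or.inr ?_
      simp only [Set.mem_singleton_iff, Prod.mk.injEq]
      exact ⟨(Equiv.eq_symm_apply u).mpr h1, (Equiv.eq_symm_apply u).mpr h2⟩
  have hfin : (InvSet u ∪ {(u⁻¹ i, u⁻¹ (i + 1))}).Finite :=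
    (invSet_finite hu).union (Set.finite_singleton _)
  calc plength (sP i * u) = (InvSet (sP i * u)).ncard := rfl
  _ ≤ (InvSet u ∪ {(u⁻¹ i, u⁻¹ (i + 1))}).ncard := Set.ncard_le_ncard hsub hfin
  _ ≤ (InvSet u).ncard + ({(u⁻¹ i, u⁻¹ (i + 1))} : Set _).ncard := Set.ncard_union_le _ _
  _ = plength u + 1 := by rw [Set.ncard_singleton]; rfl

lemma support_prod_finite (L : List ℕ+) :
    {x | ((L.map sP).prod) x ≠ x}.Finite := by
  induction L with
  | nil => simp
  | cons i L ih =>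
    rw [List.map_cons, List.prod_cons]
    apply Set.Finite.subset (ih.union ((Set.finite_singleton (i + 1)).insert i))
    intro x hx
    by_contra hmem
    simp only [Set.mem_union, Set.mem_setOf_eq, Set.mem_insert_iff,
      Set.mem_singleton_iff, not_or] at hmem
    obtain ⟨h1, h2, h3⟩ := hmem
    push_neg at h1
    apply hx
    rw [Equiv.Perm.mul_apply, h1, sP, Equiv.swap_apply_of_ne_of_ne h2 h3]

lemma plength_prod_le (L : List ℕ+) : plength ((L.map sP).prod) ≤ L.length := by
  induction L with
  | nil =>
    have h0 : InvSet ((([] : List ℕ+).map sP).prod) = ∅ := by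
      ext p
      simp only [List.map_nil, List.prod_nil, InvSet, Set.mem_setOf_eq,
        Equiv.Perm.coe_one, id_eq, Set.mem_empty_iff_false, iff_false, not_and]
      exact fun h1 => not_lt.mpr h1.le
    rw [plength_eq, h0, Set.ncard_empty]
    simp
  | cons i L ih =>
    rw [List.map_cons, List.prod_cons, List.length_cons]
    calc plength (sP i * (L.map sP).prod) ≤ plength ((L.map sP).prod) + 1 :=
          plength_sP_mul_le (support_prod_finite L) i
    _ ≤ L.length + 1 := by omega

lemma reduced_ne_adjacent {w : Equiv.Perm ℕ+} {L : List ℕ+} (h : IsReducedWordP w L) :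
    ∀ k, k + 1 < L.length → L.getD k 1 ≠ L.getD (k + 1) 1 := by
  intro k hk heq
  obtain ⟨hprod, hlen⟩ := h
  rw [List.getD_eq_getElem L 1 (by omega), List.getD_eq_getElem L 1 hk] at heq
  have hdecomp : L = L.take k ++ (L[k] :: L[k + 1] :: L.drop (k + 2)) := by
    conv_lhs => rw [← List.take_append_drop k L]
    congr 1
    rw [List.drop_eq_getElem_cons (by omega), List.drop_eq_getElem_cons (by omega)]
  have hw : ((L.take k ++ L.drop (k + 2)).map sP).prod = w := by
    rw [← hprod]
    conv_rhs => rw [hdecomp]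
    simp only [List.map_append, List.map_cons, List.prod_append, List.prod_cons]
    rw [← heq, ← mul_assoc (sP L[k]) (sP L[k]), sP, Equiv.swap_mul_self, one_mul]
  have hle := plength_prod_le (L.take k ++ L.drop (k + 2))
  rw [hw, List.length_append, List.length_take, List.length_drop] at hle
  omega

end CoxeterAux
section CellAux

/-- The letter of a cell. -/
def cellLetter (q : ℕ+ × ℕ+) : ℕ+ := q.1 + q.2 - 1

lemma cellLetter_coe (i j : ℕ+) : (cellLetter (i, j) : ℕ) = (i : ℕ) + (j : ℕ) - 1 := by
  have h1 : 0 < (i : ℕ) := i.pos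
  have h2 : 0 < (j : ℕ) := j.pos
  show ((i + j - 1 : ℕ+) : ℕ) = _
  rw [PNat.sub_coe, if_pos]
  · rw [PNat.add_coe, PNat.one_coe]
  · rw [← PNat.coe_lt_coe, PNat.add_coe, PNat.one_coe]; omega

lemma rcWord_def (D : Finset (ℕ+ × ℕ+)) : rcWord D = (D.sort cellOrd).map cellLetter := rfl

/-- The cell of a (row, letter) pair. -/
def fcell (q : ℕ+ × ℕ+) : ℕ+ × ℕ+ :=
  (q.1, (⟨(q.2 : ℕ) - (q.1 : ℕ) + 1, Nat.succ_pos _⟩ : ℕ+))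

lemma cellsOfPair_def (p : List ℕ+ × List ℕ+) :
    cellsOfPair p = ((p.2.zip p.1).map fcell).toFinset := rfl

/-- Strict cell order. -/
def cellLT (u v : ℕ+ × ℕ+) : Prop := cellOrd u v ∧ u ≠ v

instance : IsTrans (ℕ+ × ℕ+) cellLT := ⟨by
  rintro a b c ⟨h1, h2⟩ ⟨h3, h4⟩
  refine ⟨Trans.trans h1 h3, fun he => ?_⟩
  subst he
  exact h2 (antisymm h1 h3)⟩

lemma fcell_cellLetter (u : ℕ+ × ℕ+) : fcell (u.1, cellLetter u) = u := by
  obtain ⟨i, j⟩ := u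
  have h1 : 0 < (i : ℕ) := i.pos
  have h2 : 0 < (j : ℕ) := j.pos
  refine Prod.ext rfl ?_
  apply PNat.coe_injective
  show (cellLetter (i, j) : ℕ) - (i : ℕ) + 1 = (j : ℕ)
  rw [cellLetter_coe]
  omega

lemma cellLetter_fcell {i j : ℕ+} (hij : (i : ℕ) ≤ (j : ℕ)) :
    cellLetter (fcell (i, j)) = j := by
  apply PNat.coe_injective
  have : fcell (i, j) = (i, (⟨(j : ℕ) - (i : ℕ) + 1, Nat.succ_pos _⟩ : ℕ+)) := rfl
  rw [← Prod.mk.eta (p := fcell (i, j)), cellLetter_coe]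
  show (i : ℕ) + ((j : ℕ) - (i : ℕ) + 1) - 1 = (j : ℕ)
  omega

lemma fcell_snd_lt {i j j' : ℕ+} (hij : (i : ℕ) ≤ (j' : ℕ)) (h : (j' : ℕ) < (j : ℕ)) :
    (fcell (i, j')).2 < (fcell (i, j)).2 := by
  rw [← PNat.coe_lt_coe]
  show (j' : ℕ) - (i : ℕ) + 1 < (j : ℕ) - (i : ℕ) + 1
  omega

/-- The key structural lemma about the cell list of a compatible pair. -/
lemma pair_cells {a α : List ℕ+} (hc : IsCompatibleP a α)
    (hne : ∀ k, k + 1 < a.length → a.getD k 1 ≠ a.getD (k + 1) 1) :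
    ((α.zip a).map fcell).toFinset.sort cellOrd = (α.zip a).map fcell ∧
    ((α.zip a).map fcell).map cellLetter = a ∧
    ((α.zip a).map fcell).map Prod.fst = α := by
  obtain ⟨hlen, h2, h3, h4⟩ := hc
  have hcllen : ((α.zip a).map fcell).length = a.length := by
    rw [List.length_map, List.length_zip, hlen, min_self]
  have hget : ∀ k (hk : k < ((α.zip a).map fcell).length),
      ((α.zip a).map fcell)[k] = fcell (α[k]'(by rw [hcllen] at hk; omega), a[k]'(by rwa [hcllen] at hk)) := by
    intro k hk
    simp only [List.getElem_map, List.getElem_zip]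
  have h3' : ∀ k (hk : k < a.length), ((α[k]'(by omega) : ℕ+) : ℕ) ≤ ((a[k]'hk : ℕ+) : ℕ) := by
    intro k hk
    have := h3 k (by omega)
    rw [List.getD_eq_getElem α 1 (by omega), List.getD_eq_getElem a 1 hk] at this
    exact_mod_cast this
  have hchain : List.Chain' cellLT ((α.zip a).map fcell) := by
    refine List.isChain_iff_getElem.mpr ?_
    intro k hk
    have hk1 : k + 1 < ((α.zip a).map fcell).length := by omega
    have hk0 : k < ((α.zip a).map fcell).length := by omega
    have hka : k + 1 < a.length := by omega
    rw [hget k hk0, hget (k + 1) hk1]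
    have hαle := h2 k (by omega)
    rw [List.getD_eq_getElem α 1 (by omega), List.getD_eq_getElem α 1 (by omega)] at hαle
    have hane := hne k hka
    rw [List.getD_eq_getElem a 1 (by omega), List.getD_eq_getElem a 1 hka] at hane
    rcases lt_or_eq_of_le hαle with hαlt | hαeq
    · exact ⟨Or.inl hαlt, fun he => absurd (congrArg Prod.fst he) (ne_of_lt hαlt)⟩
    · have halt : (a[k + 1]'hka) < a[k]'(by omega) := by
        rcases lt_trichotomy (a[k]'(by omega)) (a[k + 1]'hka) with h | h | h
        · exfalso
          have := h4 k (by omega) (by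
            rw [List.getD_eq_getElem a 1 (by omega), List.getD_eq_getElem a 1 hka]; exact h)
          rw [List.getD_eq_getElem α 1 (by omega), List.getD_eq_getElem α 1 (by omega)] at this
          exact absurd hαeq (ne_of_lt this)
        · exact absurd h hane
        · exact h
      have hii : ((α[k]'(by omega) : ℕ+) : ℕ) ≤ ((a[k + 1]'hka : ℕ+) : ℕ) := by
        have := h3' (k + 1) hka
        rw [← hαeq] at this
        exact this
      have hcol : (fcell (α[k]'(by omega), a[k + 1]'hka)).2 < (fcell (α[k]'(by omega), a[k]'(by omega))).2 :=
        fcell_snd_lt hii (by exact_mod_cast halt)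
      rw [← hαeq]
      exact ⟨Or.inr ⟨rfl, hcol.le⟩,
        fun he => absurd (congrArg Prod.snd he).symm (ne_of_lt hcol)⟩
  have hpw : List.Pairwise cellLT ((α.zip a).map fcell) := List.isChain_iff_pairwise.mp hchain
  have hnd : ((α.zip a).map fcell).Nodup := hpw.imp (fun h => h.2)
  have hsorted : ((α.zip a).map fcell).Pairwise cellOrd := hpw.imp (fun h => h.1)
  refine ⟨(List.toFinset_sort cellOrd hnd).mpr hsorted, ?_, ?_⟩
  · apply List.ext_getElem (by rw [List.length_map, hcllen])
    intro n h1x h2x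
    rw [List.getElem_map, hget n (by simpa using h1x), cellLetter_fcell (h3' n h2x)]
  · apply List.ext_getElem (by rw [List.length_map, hcllen, hlen])
    intro n h1x h2x
    rw [List.getElem_map, hget n (by simpa using h1x)]
    rfl

end CellAux
section MainAux

lemma fst_le_cellLetter (u : ℕ+ × ℕ+) : u.1 ≤ cellLetter u := by
  obtain ⟨i, j⟩ := u
  have h2 : 0 < (j : ℕ) := j.pos
  rw [← PNat.coe_le_coe, cellLetter_coe]
  show (i : ℕ) ≤ (i : ℕ) + (j : ℕ) - 1
  omega

lemma cellLetter_le_of_ord {u v : ℕ+ × ℕ+} (h1 : u.1 = v.1) (h2 : v.2 ≤ u.2) :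
    cellLetter v ≤ cellLetter u := by
  obtain ⟨i, j⟩ := u
  obtain ⟨i', j'⟩ := v
  simp only [Prod.fst, Prod.snd] at h1 h2
  subst h1
  rw [← PNat.coe_le_coe, cellLetter_coe, cellLetter_coe]
  have : (j' : ℕ) ≤ (j : ℕ) := by exact_mod_cast h2
  have h3 : 0 < (j : ℕ) := j.pos
  have h4 : 0 < (j' : ℕ) := j'.pos
  omega

lemma pair_recover {w : Equiv.Perm ℕ+} (p : List ℕ+ × List ℕ+)
    (hr : IsReducedWordP w p.1) (hc : IsCompatibleP p.1 p.2) :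
    rcWord (cellsOfPair p) = p.1 ∧
    ((cellsOfPair p).sort cellOrd).map Prod.fst = p.2 ∧
    xD (cellsOfPair p) = (p.2.map X).prod := by
  classical
  obtain ⟨hsort, hlet, hfst⟩ := pair_cells hc (reduced_ne_adjacent hr)
  have hcp := cellsOfPair_def p
  refine ⟨?_, ?_, ?_⟩
  · rw [rcWord_def, hcp, hsort, hlet]
  · rw [hcp, hsort, hfst]
  · have hnd : ((p.2.zip p.1).map fcell).Nodup := by
      rw [← hsort]; exact Finset.sort_nodup _ _
    rw [xD, hcp, List.prod_toFinset _ hnd]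
    have hmm : ((p.2.zip p.1).map fcell).map (fun q => X (R := ℤ) q.1) =
        (((p.2.zip p.1).map fcell).map Prod.fst).map X := by
      simp only [List.map_map]; rfl
    rw [hmm, hfst]

end MainAux

theorem rcgraphs_biject_compatible_pairs (w : Equiv.Perm ℕ+) (hw : {x | w x ≠ x}.Finite) :
    Set.BijOn cellsOfPair
      {p : List ℕ+ × List ℕ+ | IsReducedWordP w p.1 ∧ IsCompatibleP p.1 p.2}
      (RCset w) ∧
    ∀ p : List ℕ+ × List ℕ+, IsReducedWordP w p.1 → IsCompatibleP p.1 p.2 →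
      rcWord (cellsOfPair p) = p.1 ∧
      xD (cellsOfPair p) = (p.2.map X).prod := by
  classical
  constructor
  · refine ⟨?_, ?_, ?_⟩
    · -- MapsTo
      rintro p ⟨hr, hc⟩
      show IsRCGraph w (cellsOfPair p)
      rw [IsRCGraph, (pair_recover p hr hc).1]
      exact hr
    · -- InjOn
      rintro p ⟨hr, hc⟩ p' ⟨hr', hc'⟩ he
      have R := pair_recover p hr hc
      have R' := pair_recover p' hr' hc'
      refine Prod.ext ?_ ?_
      · rw [← R.1, ← R'.1, he]
      · rw [← R.2.1, ← R'.2.1, he]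
    · -- SurjOn
      intro D hD
      have hD' : IsReducedWordP w (rcWord D) := hD
      have hadj : ∀ (k : ℕ) (hk : k + 1 < (D.sort cellOrd).length),
          cellOrd ((D.sort cellOrd)[k]'(by omega)) ((D.sort cellOrd)[k+1]'hk) := by
        have hs := (Finset.pairwise_sort (s := D) (r := cellOrd)).isChain
        rw [List.isChain_iff_getElem] at hs
        intro k hk
        simpa using hs k (by omega)
      have hlenW : (rcWord D).length = (D.sort cellOrd).length := by
        rw [rcWord_def, List.length_map]
      have hgetA : ∀ k (hk : k < (D.sort cellOrd).length),
          (rcWord D).getD k 1 = cellLetter ((D.sort cellOrd)[k]'hk) := by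
        intro k hk
        rw [rcWord_def, List.getD_eq_getElem _ 1 (by rw [List.length_map]; exact hk),
          List.getElem_map]
      have hgetF : ∀ k (hk : k < (D.sort cellOrd).length),
          ((D.sort cellOrd).map Prod.fst).getD k 1 = ((D.sort cellOrd)[k]'hk).1 := by
        intro k hk
        rw [List.getD_eq_getElem _ 1 (by rw [List.length_map]; exact hk), List.getElem_map]
      have hlenF : ((D.sort cellOrd).map Prod.fst).length = (D.sort cellOrd).length :=
        List.length_map _
      refine ⟨(rcWord D, (D.sort cellOrd).map Prod.fst), ⟨hD', ?_, ?_, ?_, ?_⟩, ?_⟩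
      · rw [hlenF, hlenW]
      · intro k hk
        rw [hlenF] at hk
        rw [hgetF k (by omega), hgetF (k+1) hk]
        rcases hadj k hk with h | ⟨h, _⟩
        · exact h.le
        · exact le_of_eq h
      · intro k hk
        rw [hlenF] at hk
        rw [hgetF k hk, hgetA k hk]
        exact fst_le_cellLetter _
      · intro k hk hlt
        rw [hlenF] at hk
        rw [hgetA k (by omega), hgetA (k+1) hk] at hlt
        rw [hgetF k (by omega), hgetF (k+1) hk]
        rcases hadj k hk with h | ⟨h, h2⟩
        · exact h
        · exact absurd hlt (not_lt.mpr (cellLetter_le_of_ord h h2))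
      · -- cellsOfPair (rcWord D, map fst) = D
        rw [cellsOfPair_def]
        show ((((D.sort cellOrd).map Prod.fst).zip (rcWord D)).map fcell).toFinset = D
        rw [rcWord_def, List.zip_map', List.map_map]
        have hid : (D.sort cellOrd).map (fcell ∘ fun u => (u.1, cellLetter u)) = D.sort cellOrd := by
          conv_rhs => rw [← List.map_id (D.sort cellOrd)]
          exact List.map_congr_left (fun u _ => fcell_cellLetter u)
        rw [hid, Finset.sort_toFinset]
  · intro p hr hc
    exact ⟨(pair_recover p hr hc).1, (pair_recover p hr hc).2.2⟩
end
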